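/- Every triple of the form (L_a, −ε·L_{a+εb}, L_b) with a, b odd coprime integers and ε ∈ {±1} can be transformed by a finite sequence of mutations and sign changes into the triple (1, 2, 1). -/

import Mathlib

/-- Fibonacci numbers extended to all integer indices. -/
def fibZ : ℤ → ℤ
  | Int.ofNat n => Nat.fib n
  | Int.negSucc n => (-1) ^ n * Nat.fib (n + 1)

/-- Lucas numbers extended to all integer indices: `L_n = F_{n−1} + F_{n+1}`. -/
def lucZ (n : ℤ) : ℤ := fibZ (n - 1) + fibZ (n + 1)

/-- One step: a mutation (in one of the three coordinates, with the sign
conventions preserving the equation `x₁² − x₂² + x₃² − x₁x₂x₃ = −4`) or a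
sign change of two coordinates. -/
def MutStep : ℤ × ℤ × ℤ → ℤ × ℤ × ℤ → Prop := fun p q =>
  q = (p.2.1 * p.2.2 - p.1, p.2.1, p.2.2) ∨
  q = (p.1, -(p.1 * p.2.2) - p.2.1, p.2.2) ∨
  q = (p.1, p.2.1, p.1 * p.2.1 - p.2.2) ∨
  q = (-p.1, -p.2.1, p.2.2) ∨
  q = (-p.1, p.2.1, -p.2.2) ∨
  q = (p.1, -p.2.1, -p.2.2)

lemma fibZ_add_two (n : ℤ) : fibZ (n + 2) = fibZ (n + 1) + fibZ n := by
  cases n with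
  | ofNat k =>
      show fibZ ((k : ℤ) + 2) = fibZ ((k : ℤ) + 1) + fibZ (k : ℤ)
      have h2 : ((k : ℤ) + 2) = Int.ofNat (k + 2) := by simp
      have h1 : ((k : ℤ) + 1) = Int.ofNat (k + 1) := by simp
      rw [h2, h1]
      show ((Nat.fib (k+2) : ℤ)) = Nat.fib (k+1) + Nat.fib k
      rw [Nat.fib_add_two]; push_cast; ring
  | negSucc k =>
      match k with
      | 0 => decide
      | 1 => decide
      | (k+2) =>
        have e2 : Int.negSucc (k+2) + 2 = Int.negSucc k := by
          simp [Int.negSucc_eq]; ring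
        have e1 : Int.negSucc (k+2) + 1 = Int.negSucc (k+1) := by
          simp [Int.negSucc_eq]; ring
        rw [e2, e1]
        show (-1:ℤ)^k * Nat.fib (k+1) = (-1)^(k+1) * Nat.fib (k+2) + (-1)^(k+2) * Nat.fib (k+3)
        rw [show k+3 = (k+1)+2 by ring, Nat.fib_add_two (n := k+1)]
        push_cast; ring_nf

lemma lucZ_add_two (n : ℤ) : lucZ (n + 2) = lucZ (n + 1) + lucZ n := by
  unfold lucZ
  have h1 := fibZ_add_two (n - 1)
  have h2 := fibZ_add_two (n + 1)
  ring_nf at *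
  linarith

lemma fibZ_neg_nat (n : ℕ) : fibZ (-(n : ℤ)) = (-1) ^ (n + 1) * fibZ n := by
  match n with
  | 0 => decide
  | (k+1) =>
    have e : (-( (k+1 : ℕ) : ℤ)) = Int.negSucc k := by
      simp [Int.negSucc_eq]
    rw [e]
    show (-1:ℤ)^k * Nat.fib (k+1) = (-1)^(k+2) * fibZ (Int.ofNat (k+1))
    show (-1:ℤ)^k * Nat.fib (k+1) = (-1)^(k+2) * (Nat.fib (k+1) : ℤ)
    ring

lemma lucZ_neg_nat (n : ℕ) : lucZ (-(n : ℤ)) = (-1) ^ n * lucZ n := by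
  match n with
  | 0 => decide
  | (k+1) =>
    unfold lucZ
    have e1 : (-((k+1:ℕ) : ℤ)) - 1 = -((k+2 : ℕ) : ℤ) := by push_cast; ring
    have e2 : (-((k+1:ℕ) : ℤ)) + 1 = -((k : ℕ) : ℤ) := by push_cast; ring
    rw [e1, e2, fibZ_neg_nat, fibZ_neg_nat]
    have e3 : ((k+1:ℕ) : ℤ) - 1 = ((k:ℕ) : ℤ) := by push_cast; ring
    have e4 : ((k+1:ℕ) : ℤ) + 1 = ((k+2:ℕ) : ℤ) := by push_cast; ring
    rw [e3, e4]
    ring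

lemma lucZ_neg_even {n : ℤ} (hn : Even n) : lucZ (-n) = lucZ n := by
  rcases le_or_gt 0 n with h | h
  · obtain ⟨m, rfl⟩ := Int.eq_ofNat_of_zero_le h
    rw [lucZ_neg_nat]
    have : Even m := by rwa [Int.even_coe_nat] at hn
    rw [this.neg_one_pow]; ring
  · obtain ⟨m, rfl⟩ : ∃ m : ℕ, n = -(m : ℤ) := ⟨n.natAbs, by omega⟩
    rw [neg_neg, lucZ_neg_nat]
    have : Even m := by rw [← Int.even_coe_nat]; exact (by simpa using hn.neg)
    rw [this.neg_one_pow]; ring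

lemma lucZ_neg_odd {n : ℤ} (hn : Odd n) : lucZ (-n) = -lucZ n := by
  rcases le_or_gt 0 n with h | h
  · obtain ⟨m, rfl⟩ := Int.eq_ofNat_of_zero_le h
    rw [lucZ_neg_nat]
    have : Odd m := by rwa [Int.odd_coe_nat] at hn
    rw [this.neg_one_pow]; ring
  · obtain ⟨m, rfl⟩ : ∃ m : ℕ, n = -(m : ℤ) := ⟨n.natAbs, by omega⟩
    rw [neg_neg, lucZ_neg_nat]
    have : Odd m := by rw [← Int.odd_coe_nat]; exact (by simpa using hn.neg)
    rw [this.neg_one_pow]; ring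

lemma lucZ_zero : lucZ 0 = 2 := by decide
lemma lucZ_one : lucZ 1 = 1 := by decide
lemma lucZ_two : lucZ 2 = 3 := by decide

lemma lucZ_mul_odd {n : ℤ} (hn : Odd n) (m : ℤ) :
    lucZ m * lucZ n = lucZ (m + n) - lucZ (m - n) := by
  have key : ∀ m : ℤ, (lucZ m * lucZ n = lucZ (m + n) - lucZ (m - n)) ∧
      (lucZ (m+1) * lucZ n = lucZ (m + 1 + n) - lucZ (m + 1 - n)) := by
    intro m
    induction m using Int.induction_on with
    | zero =>
      constructor
      · rw [lucZ_zero, zero_add, zero_sub, lucZ_neg_odd hn]; ring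
      · rw [show (0:ℤ)+1 = 1 by ring, lucZ_one, one_mul]
        have h := lucZ_add_two (n - 1)
        rw [show (1:ℤ) - n = -(n - 1) by ring,
          lucZ_neg_even (by simpa using hn.sub_odd odd_one),
          show (1:ℤ)+n = (n-1)+2 by ring, h, show n - 1 + 1 = n by ring]
        ring
    | succ k ih =>
      refine ⟨ih.2, ?_⟩
      have h1 := lucZ_add_two k
      have h2 := lucZ_add_two (k + n)
      have h3 := lucZ_add_two (k - n)
      obtain ⟨g1, g2⟩ := ih
      ring_nf at h1 h2 h3 g1 g2 ⊢
      linear_combination lucZ n * h1 + g1 + g2 - h2 + h3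
    | pred k ih =>
      constructor
      case right => rw [show -(k:ℤ)-1+1 = -k by ring]; exact ih.1
      have h1 := lucZ_add_two (-k - 1)
      have h2 := lucZ_add_two (-k - 1 + n)
      have h3 := lucZ_add_two (-k - 1 - n)
      obtain ⟨g1, g2⟩ := ih
      ring_nf at h1 h2 h3 g1 g2 ⊢
      linear_combination (-lucZ n) * h1 + g2 - g1 + h2 - h3
  exact (key m).1

lemma lucZ_mul_even {n : ℤ} (hn : Even n) (m : ℤ) :
    lucZ m * lucZ n = lucZ (m + n) + lucZ (m - n) := by
  have key : ∀ m : ℤ, (lucZ m * lucZ n = lucZ (m + n) + lucZ (m - n)) ∧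
      (lucZ (m+1) * lucZ n = lucZ (m + 1 + n) + lucZ (m + 1 - n)) := by
    intro m
    induction m using Int.induction_on with
    | zero =>
      constructor
      · rw [lucZ_zero, zero_add, zero_sub, lucZ_neg_even hn]; ring
      · rw [show (0:ℤ)+1 = 1 by ring, lucZ_one, one_mul]
        have h := lucZ_add_two (n - 1)
        rw [show (1:ℤ) - n = -(n - 1) by ring,
          lucZ_neg_odd (by simpa using hn.sub_odd odd_one),
          show (1:ℤ)+n = (n-1)+2 by ring, h, show n - 1 + 1 = n by ring]
        ring
    | succ k ih =>
      refine ⟨ih.2, ?_⟩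
      have h1 := lucZ_add_two k
      have h2 := lucZ_add_two (k + n)
      have h3 := lucZ_add_two (k - n)
      obtain ⟨g1, g2⟩ := ih
      ring_nf at h1 h2 h3 g1 g2 ⊢
      linear_combination lucZ n * h1 + g1 + g2 - h2 - h3
    | pred k ih =>
      constructor
      case right => rw [show -(k:ℤ)-1+1 = -k by ring]; exact ih.1
      have h1 := lucZ_add_two (-k - 1)
      have h2 := lucZ_add_two (-k - 1 + n)
      have h3 := lucZ_add_two (-k - 1 - n)
      obtain ⟨g1, g2⟩ := ih
      ring_nf at h1 h2 h3 g1 g2 ⊢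
      linear_combination (-lucZ n) * h1 + g2 - g1 + h2 + h3
  exact (key m).1

lemma triple_eq {x1 x2 x3 y1 y2 y3 : ℤ} (h1 : x1 = y1) (h2 : x2 = y2) (h3 : x3 = y3) :
    ((x1, x2, x3) : ℤ × ℤ × ℤ) = (y1, y2, y3) := by rw [h1, h2, h3]

def T (a b ε : ℤ) : ℤ × ℤ × ℤ := (lucZ a, -ε * lucZ (a + ε * b), lucZ b)

lemma step_negA (a b ε : ℤ) (ha : Odd a) (hb : Odd b) (hε : ε = 1 ∨ ε = -1) :
    MutStep (T a b ε) (T (-a) b (-ε)) := by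
  have hev : Even (a + ε * b) := by
    rcases hε with rfl | rfl
    · simpa using ha.add_odd hb
    · rw [show a + -1 * b = a - b by ring]; exact ha.sub_odd hb
  right; right; right; left
  simp only [T]
  apply triple_eq
  · exact lucZ_neg_odd ha
  · rw [show -a + -ε * b = -(a + ε * b) by ring, lucZ_neg_even hev]; ring
  · rfl

lemma step_negB (a b ε : ℤ) (hb : Odd b) :
    MutStep (T a b ε) (T a (-b) (-ε)) := by
  right; right; right; right; right
  simp only [T]
  apply triple_eq
  · rfl
  · rw [show a + -ε * -b = a + ε * b by ring]; ring
  · exact lucZ_neg_odd hb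

lemma step_toggle (a b ε : ℤ) (hb : Odd b) (hε : ε = 1 ∨ ε = -1) :
    MutStep (T a b ε) (T a b (-ε)) := by
  right; left
  simp only [T]
  apply triple_eq
  · rfl
  · have h := lucZ_mul_odd hb a
    rcases hε with rfl | rfl <;>
    · ring_nf at h ⊢
      linarith
  · rfl

lemma reach_subA (a b ε : ℤ) (ha : Odd a) (hb : Odd b) (hε : ε = 1 ∨ ε = -1) :
    Relation.ReflTransGen MutStep (T a b ε) (T (a - 2*b) b 1) := by
  have core : Relation.ReflTransGen MutStep (T a b (-1)) (T (a - 2*b) b 1) := by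
    have h := lucZ_mul_odd hb (a - b)
    refine Relation.ReflTransGen.head ?_ (Relation.ReflTransGen.head ?_ .refl)
      (b := (-(lucZ (a - 2*b)), -(-1) * lucZ (a + -1 * b), lucZ b))
    · left
      simp only [T]
      apply triple_eq
      · rw [show a - b + b = a by ring, show a - b - b = a - 2*b by ring] at h
        ring_nf at h ⊢
        linarith
      · rfl
      · rfl
    · right; right; right; left
      simp only [T]
      apply triple_eq
      · ring
      · rw [show a - 2*b + 1*b = a + -1*b by ring]; ring
      · rfl
  rcases hε with rfl | rfl
  · exact .head (step_toggle a b 1 hb (Or.inl rfl)) core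
  · exact core

lemma reach_subB (a b ε : ℤ) (ha : Odd a) (hb : Odd b) (hε : ε = 1 ∨ ε = -1) :
    Relation.ReflTransGen MutStep (T a b ε) (T a (b - 2*a) 1) := by
  have hodd : Odd (b - 2*a) := by
    rcases hb with ⟨k, hk⟩; exact ⟨k - a, by omega⟩
  have hev : Even (a - b) := ha.sub_odd hb
  have core : Relation.ReflTransGen MutStep (T a b (-1)) (T a (b - 2*a) 1) := by
    have h := lucZ_mul_even hev a
    refine Relation.ReflTransGen.head ?_ (Relation.ReflTransGen.head ?_ .refl)
      (b := (lucZ a, -(-1) * lucZ (a + -1 * b), -lucZ (b - 2*a)))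
    · right; right; left
      simp only [T]
      apply triple_eq
      · rfl
      · rfl
      · rw [show a + (a - b) = -(b - 2*a) by ring, show a - (a - b) = b by ring,
          lucZ_neg_odd hodd] at h
        ring_nf at h ⊢
        linarith
    · right; right; right; right; right
      simp only [T]
      apply triple_eq
      · rfl
      · rw [show a + 1*(b - 2*a) = -(a - b) by ring, lucZ_neg_even hev]; ring
      · ring
  rcases hε with rfl | rfl
  · exact .head (step_toggle a b 1 hb (Or.inl rfl)) core
  · exact core

lemma base_reach (ε : ℤ) (hε : ε = 1 ∨ ε = -1) :
    Relation.ReflTransGen MutStep (T 1 1 ε) (1, 2, 1) := by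
  rcases hε with rfl | rfl
  · have e : T 1 1 1 = (1, -3, 1) := by
      simp only [T]
      norm_num [lucZ_one, lucZ_two]
    rw [e]
    refine Relation.ReflTransGen.head ?_ .refl
    right; left
    norm_num
  · have e : T 1 1 (-1) = (1, 2, 1) := by
      simp only [T]
      norm_num [lucZ_one, lucZ_zero]
    rw [e]

lemma main_reach : ∀ (n : ℕ) (a b ε : ℤ), Odd a → Odd b → IsCoprime a b →
    (ε = 1 ∨ ε = -1) → a.natAbs + b.natAbs ≤ n →
    Relation.ReflTransGen MutStep (T a b ε) (1, 2, 1) := by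
  intro n
  induction n using Nat.strong_induction_on with
  | _ n IH =>
  have core : ∀ (A B ε' : ℤ), Odd A → Odd B → IsCoprime A B → (ε' = 1 ∨ ε' = -1) →
      0 < A → 0 < B → A.natAbs + B.natAbs ≤ n →
      Relation.ReflTransGen MutStep (T A B ε') (1, 2, 1) := by
    intro A B ε' hA hB hAB hε' hposA hposB hn
    rcases lt_trichotomy A B with hlt | heq | hgt
    · -- reduce B
      have hodd : Odd (B - 2*A) := by rcases hB with ⟨k, hk⟩; exact ⟨k - A, by omega⟩
      have hcop : IsCoprime A (B - 2*A) := by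
        have := hAB.add_mul_left_right (-2)
        rwa [show B + A * (-2) = B - 2*A by ring] at this
      have hm : A.natAbs + (B - 2*A).natAbs < n := by omega
      exact (reach_subB A B ε' hA hB hε').trans
        (IH _ hm A (B - 2*A) 1 hA hodd hcop (Or.inl rfl) le_rfl)
    · subst heq
      have hu : IsUnit A := hAB.isUnit_of_dvd' dvd_rfl dvd_rfl
      have h1 : A = 1 := by
        rcases Int.isUnit_iff.mp hu with h | h
        · exact h
        · omega
      subst h1
      exact base_reach ε' hε'
    · -- reduce A
      have hodd : Odd (A - 2*B) := by rcases hA with ⟨k, hk⟩; exact ⟨k - B, by omega⟩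
      have hcop : IsCoprime (A - 2*B) B := by
        have := hAB.add_mul_left_left (-2)
        rwa [show A + B * (-2) = A - 2*B by ring] at this
      have hm : (A - 2*B).natAbs + B.natAbs < n := by omega
      exact (reach_subA A B ε' hA hB hε').trans
        (IH _ hm (A - 2*B) B 1 hodd hB hcop (Or.inl rfl) le_rfl)
  intro a b ε ha hb hab hε hn
  have ha0 : a ≠ 0 := by rcases ha with ⟨k, hk⟩; omega
  have hb0 : b ≠ 0 := by rcases hb with ⟨k, hk⟩; omega
  have hnegε : -ε = 1 ∨ -ε = -1 := by rcases hε with rfl | rfl <;> omega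
  have hnegnegε : -(-ε) = 1 ∨ -(-ε) = -1 := by rcases hε with rfl | rfl <;> omega
  rcases lt_or_gt_of_ne ha0 with hA | hA <;> rcases lt_or_gt_of_ne hb0 with hB | hB
  · exact .head (step_negA a b ε ha hb hε)
      (.head (step_negB (-a) b (-ε) hb)
        (core (-a) (-b) (-(-ε)) ha.neg hb.neg (hab.neg_left.neg_right) hnegnegε
          (by omega) (by omega) (by omega)))
  · exact .head (step_negA a b ε ha hb hε)
      (core (-a) b (-ε) ha.neg hb hab.neg_left hnegε (by omega) hB (by omega))
  · exact .head (step_negB a b ε hb)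
      (core a (-b) (-ε) ha hb.neg hab.neg_right hnegε hA (by omega) (by omega))
  · exact core a b ε ha hb hab hε hA hB hn


/-- every triple `(L_a, −ε·L_{a+εb}, L_b)` with `a, b` odd and
coprime and `ε = ±1` can be transformed into `(1, 2, 1)` by a finite sequence
of mutations and sign changes. -/
theorem stmt17 (a b ε : ℤ) (ha : Odd a) (hb : Odd b) (hab : IsCoprime a b)
    (hε : ε = 1 ∨ ε = -1) :
    Relation.ReflTransGen MutStep
      (lucZ a, -ε * lucZ (a + ε * b), lucZ b) (1, 2, 1) := by
  exact main_reach (a.natAbs + b.natAbs) a b ε ha hb hab hε le_rfl
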